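/- Let e be a directed segment with p strictly to its left but p ∉ F, where F is a convex polygon having e on its boundary. Then there exists an edge e' of F with p strictly to the right of e' and with celestial distance Dist(e', p) strictly smaller than Dist(e, p). -/

import Mathlib

open Metric RealInnerProductSpace

noncomputable section

abbrev Pt := EuclideanSpace ℝ (Fin 2)

/-- 2D determinant (orientation test). -/
def det2 (x y : Pt) : ℝ := x 0 * y 1 - x 1 * y 0

lemma isCompact_seg (a b : Pt) : IsCompact (segment ℝ a b) := by
  rw [segment_eq_image']
  exact isCompact_Icc.image (by continuity)

/-- A closest point of the segment `[a,b]` to `p`. -/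
def closestPt (a b p : Pt) : Pt :=
  Classical.choose ((isCompact_seg a b).exists_infDist_eq_dist
    ⟨a, left_mem_segment ℝ a b⟩ p)

/-- The wide angle (≥ π/2) between segment `[a,b]` and the segment from `p`
to its closest point on `[a,b]`, or `0` if `p` lies on the segment. -/
def wideAngle (a b p : Pt) : ℝ :=
  if infDist p (segment ℝ a b) = 0 then 0
  else max (InnerProductGeometry.angle (p - closestPt a b p) (a - closestPt a b p))
           (InnerProductGeometry.angle (p - closestPt a b p) (b - closestPt a b p))

/-- Celestial distance of edge `[a,b]` to `p`. -/
def celestialDist (a b p : Pt) : ℝ × ℝ :=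
  (infDist p (segment ℝ a b), wideAngle a b p)

/-- Lexicographic comparison of celestial distances. -/
def cLt (x y : ℝ × ℝ) : Prop := x.1 < y.1 ∨ (x.1 = y.1 ∧ x.2 < y.2)

end

set_option maxHeartbeats 1000000

noncomputable section
lemma inner2 (x y : Pt) : ⟪x, y⟫ = x 0 * y 0 + x 1 * y 1 := by
  simp [PiLp.inner_apply, RCLike.inner_apply, conj_trivial, Fin.sum_univ_two]; ring

lemma normsq (x : Pt) : ‖x‖ ^ 2 = x 0 ^ 2 + x 1 ^ 2 := by
  rw [← real_inner_self_eq_norm_sq, inner2]; ring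

lemma lagrange (w z : Pt) : ⟪w, z⟫ ^ 2 + det2 w z ^ 2 = ‖w‖ ^ 2 * ‖z‖ ^ 2 := by
  rw [inner2, normsq, normsq, det2]; ring

lemma detid (w x y : Pt) :
    det2 x y * ‖w‖ ^ 2 = det2 w y * ⟪w, x⟫ - det2 w x * ⟪w, y⟫ := by
  rw [inner2, inner2, normsq]; simp only [det2]; ring

lemma det2_antisymm (x y : Pt) : det2 x y = - det2 y x := by simp only [det2]; ring

lemma det2_flip (q a b : Pt) : det2 (q - a) (b - a) = - det2 (a - q) (b - q) := by
  simp only [det2, PiLp.sub_apply]; ring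

lemma PD_ne (w z : Pt) (hw : w ≠ 0) (hz : z ≠ 0) (hP : ⟪w, z⟫ = 0) : det2 w z ≠ 0 := by
  intro hD
  have l := lagrange w z
  rw [hP, hD] at l
  have hw' : 0 < ‖w‖ := norm_pos_iff.mpr hw
  have hz' : 0 < ‖z‖ := norm_pos_iff.mpr hz
  have := pow_pos hw' 2
  have := pow_pos hz' 2
  nlinarith

lemma eq_of_PD {w x y : Pt} (hw : w ≠ 0) (hP : ⟪w, x⟫ = ⟪w, y⟫) (hD : det2 w x = det2 w y) :
    x = y := by
  rw [inner2, inner2] at hP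
  simp only [det2] at hD
  have hw2 : ‖w‖ ^ 2 ≠ 0 := pow_ne_zero _ (norm_ne_zero_iff.mpr hw)
  rw [normsq] at hw2
  have k0 : (w 0 ^ 2 + w 1 ^ 2) * (x 0 - y 0) =
      w 0 * ((w 0 * x 0 + w 1 * x 1) - (w 0 * y 0 + w 1 * y 1))
      - w 1 * ((w 0 * x 1 - w 1 * x 0) - (w 0 * y 1 - w 1 * y 0)) := by ring
  have k1 : (w 0 ^ 2 + w 1 ^ 2) * (x 1 - y 1) =
      w 1 * ((w 0 * x 0 + w 1 * x 1) - (w 0 * y 0 + w 1 * y 1))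
      + w 0 * ((w 0 * x 1 - w 1 * x 0) - (w 0 * y 1 - w 1 * y 0)) := by ring
  rw [hP, hD] at k0 k1
  simp only [sub_self, mul_zero, zero_sub, sub_zero, add_zero, zero_add] at k0 k1
  have h0 : x 0 = y 0 := by
    have := mul_eq_zero.mp (by linarith [k0] : (w 0 ^ 2 + w 1 ^ 2) * (x 0 - y 0) = 0)
    rcases this with h | h
    · exact absurd h hw2
    · linarith
  have h1 : x 1 = y 1 := by
    have := mul_eq_zero.mp (by linarith [k1] : (w 0 ^ 2 + w 1 ^ 2) * (x 1 - y 1) = 0)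
    rcases this with h | h
    · exact absurd h hw2
    · linarith
  ext j
  fin_cases j <;> assumption

lemma line_convex (u x₀ : Pt) : Convex ℝ {x : Pt | det2 u (x - x₀) = 0} := by
  intro x hx y hy a b ha hb hab
  simp only [Set.mem_setOf_eq, det2, PiLp.sub_apply, PiLp.add_apply, PiLp.smul_apply,
    smul_eq_mul] at *
  linear_combination a * hx + b * hy + (u 0 * x₀ 1 - u 1 * x₀ 0) * hab

lemma line_interior_empty (u x₀ : Pt) (hu : u ≠ 0) :
    interior {x : Pt | det2 u (x - x₀) = 0} = ∅ := by
  by_contra h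
  obtain ⟨y, hy⟩ := Set.nonempty_iff_ne_empty.mpr h
  obtain ⟨ε, hε, hball⟩ := Metric.mem_nhds_iff.mp (mem_interior_iff_mem_nhds.mp hy)
  -- pick z with det2 u z ≠ 0
  obtain ⟨z, hz⟩ : ∃ z : Pt, det2 u z ≠ 0 := by
    by_cases h0 : u 1 = 0
    · have h1 : u 0 ≠ 0 := by
        intro h1; apply hu; ext j; fin_cases j <;> simp [h1, h0]
      exact ⟨EuclideanSpace.single 1 1, by simp [det2, EuclideanSpace.single_apply, h1]⟩
    · exact ⟨EuclideanSpace.single 0 1, by simp [det2, EuclideanSpace.single_apply, h0]⟩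
  have hzn : 0 < ‖z‖ := by
    refine norm_pos_iff.mpr ?_; intro h0; rw [h0] at hz; simp [det2] at hz
  set δ : ℝ := ε / (2 * ‖z‖) with hδ
  have hδpos : 0 < δ := div_pos hε (by positivity)
  have hmem : y + δ • z ∈ Metric.ball y ε := by
    have hval : ‖δ • z‖ = ε / 2 := by
      rw [norm_smul, Real.norm_eq_abs, abs_of_pos hδpos, hδ]
      field_simp
    simp only [Metric.mem_ball, dist_eq_norm, add_sub_cancel_left, hval]
    linarith
  have hin : det2 u (y + δ • z - x₀) = 0 := hball hmem
  have hyline : det2 u (y - x₀) = 0 := by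
    have : y ∈ {x : Pt | det2 u (x - x₀) = 0} := interior_subset hy
    exact this
  have hexp : det2 u (y + δ • z - x₀) = det2 u (y - x₀) + δ * det2 u z := by
    simp only [det2, PiLp.sub_apply, PiLp.add_apply, PiLp.smul_apply, smul_eq_mul]; ring
  rw [hexp, hyline, zero_add] at hin
  rcases mul_eq_zero.mp hin with h | h
  · exact absurd h (ne_of_gt hδpos)
  · exact hz h

lemma hull_degenerate {n : ℕ} (v : Fin n → Pt) (u x₀ : Pt) (hu : u ≠ 0)
    (h : ∀ k, det2 u (v k - x₀) = 0) :
    interior (convexHull ℝ (Set.range v)) = ∅ := by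
  have hsub : convexHull ℝ (Set.range v) ⊆ {x : Pt | det2 u (x - x₀) = 0} := by
    apply convexHull_min _ (line_convex u x₀)
    rintro x ⟨k, rfl⟩
    exact h k
  have := interior_mono hsub
  rw [line_interior_empty u x₀ hu] at this
  exact Set.eq_empty_iff_forall_notMem.mpr fun x hx => (this hx)

lemma proj_unique {K : Set Pt} (hK : Convex ℝ K) {p q1 q2 : Pt} (h1 : q1 ∈ K) (h2 : q2 ∈ K)
    (e1 : dist p q1 = infDist p K) (e2 : dist p q2 = infDist p K) : q1 = q2 := by
  have conv : ∀ q : Pt, q ∈ K → dist p q = infDist p K →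
      ∀ x ∈ K, ⟪p - q, x - q⟫ ≤ 0 := by
    intro q hq he
    apply (norm_eq_iInf_iff_real_inner_le_zero hK hq).mp
    rw [← dist_eq_norm, he, infDist_eq_iInf]
    simp only [dist_eq_norm]
  have hv1 := conv q1 h1 e1 q2 h2
  have hv2 := conv q2 h2 e2 q1 h1
  have hsum : ⟪q2 - q1, q2 - q1⟫ ≤ 0 := by
    have hid : ⟪q2 - q1, q2 - q1⟫ = ⟪p - q1, q2 - q1⟫ - ⟪p - q2, q2 - q1⟫ := by
      rw [← inner_sub_left]
      congr 1
      abel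
    have h2' : ⟪p - q2, q2 - q1⟫ = - ⟪p - q2, q1 - q2⟫ := by
      rw [← inner_neg_right]
      congr 1
      abel
    rw [hid, h2']
    linarith
  have : ‖q2 - q1‖ ^ 2 ≤ 0 := by rw [← real_inner_self_eq_norm_sq]; exact hsum
  have : ‖q2 - q1‖ = 0 := by nlinarith [norm_nonneg (q2 - q1)]
  have := norm_eq_zero.mp this
  symm
  exact sub_eq_zero.mp this

lemma pi_div_two_le_angle (x y : Pt) (h : ⟪x, y⟫ ≤ 0) :
    Real.pi / 2 ≤ InnerProductGeometry.angle x y := by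
  unfold InnerProductGeometry.angle
  rw [Real.arccos, le_sub_self_iff]
  apply Real.arcsin_nonpos.mpr
  apply div_nonpos_of_nonpos_of_nonneg h
  positivity

lemma angle_lt_angle (w z1 z2 : Pt) (hw : w ≠ 0) (h1 : z1 ≠ 0) (h2 : z2 ≠ 0)
    (hkey : ⟪w, z2⟫ * ‖z1‖ < ⟪w, z1⟫ * ‖z2‖) :
    InnerProductGeometry.angle w z1 < InnerProductGeometry.angle w z2 := by
  unfold InnerProductGeometry.angle
  have hw' : 0 < ‖w‖ := norm_pos_iff.mpr hw
  have h1' : 0 < ‖z1‖ := norm_pos_iff.mpr h1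
  have h2' : 0 < ‖z2‖ := norm_pos_iff.mpr h2
  have b1 := abs_real_inner_div_norm_mul_norm_le_one w z1
  have b2 := abs_real_inner_div_norm_mul_norm_le_one w z2
  rw [abs_le] at b1 b2
  apply Real.strictAntiOn_arccos (Set.mem_Icc.mpr ⟨b2.1, b2.2⟩) (Set.mem_Icc.mpr ⟨b1.1, b1.2⟩)
  rw [div_lt_div_iff₀ (by positivity) (by positivity)]
  calc ⟪w, z2⟫ * (‖w‖ * ‖z1‖) = ‖w‖ * (⟪w, z2⟫ * ‖z1‖) := by ring
  _ < ‖w‖ * (⟪w, z1⟫ * ‖z2‖) := by exact (mul_lt_mul_iff_right₀ hw').mpr hkey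
  _ = ⟪w, z1⟫ * (‖w‖ * ‖z2‖) := by ring

lemma key_core {X Y A B : ℝ} (hXY : X ≤ Y) (hY0 : Y ≤ 0) (hA0 : A < 0) (hB0 : B < 0)
    (hsq : X ^ 2 + A ^ 2 = Y ^ 2 + B ^ 2) (hBXAY : B * X ≤ A * Y) : X = Y ∧ A = B := by
  have hAB : B ≤ A := by nlinarith
  have hAYBX : A * Y ≤ B * X := by
    nlinarith [mul_le_mul (by linarith : -A ≤ -B) (by linarith : -Y ≤ -X)
      (by linarith : (0:ℝ) ≤ -Y) (by linarith : (0:ℝ) ≤ -B)]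
  have heq : A * Y = B * X := le_antisymm hAYBX hBXAY
  have h1 : A * (Y - X) = (B - A) * X := by linear_combination heq
  have hL : A * (Y - X) ≤ 0 := mul_nonpos_of_nonpos_of_nonneg (le_of_lt hA0) (by linarith)
  have hR : 0 ≤ (B - A) * X := by nlinarith
  have h2 : A * (Y - X) = 0 := le_antisymm hL (by rw [h1]; exact hR)
  have hXeqY : X = Y := by
    rcases mul_eq_zero.mp h2 with h | h
    · exact absurd h (ne_of_lt hA0)
    · linarith
  refine ⟨hXeqY, ?_⟩
  have hsq2 : (A - B) * (A + B) = 0 := by linear_combination hsq - (X + Y) * hXeqY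
  rcases mul_eq_zero.mp hsq2 with h | h
  · linarith
  · linarith

lemma key_ineq {W nj no Pj Dj Po Do : ℝ} (hW : 0 < W) (hnj : 0 < nj) (hno : 0 < no)
    (LJ : Pj ^ 2 + Dj ^ 2 = W * nj ^ 2) (LO : Po ^ 2 + Do ^ 2 = W * no ^ 2)
    (hPj : Pj ≤ 0) (hPo : Po ≤ 0) (hDj : Dj < 0) (hDo : Do < 0)
    (hstar : Do * Pj ≤ Dj * Po)
    (hcon : Pj * no ≤ Po * nj) :
    Pj * no = Po * nj ∧ Dj * no = Do * nj := by
  apply key_core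
  · exact hcon
  · exact mul_nonpos_of_nonpos_of_nonneg hPo (le_of_lt hnj)
  · exact mul_neg_of_neg_of_pos hDj hno
  · exact mul_neg_of_neg_of_pos hDo hnj
  · linear_combination no ^ 2 * LJ - nj ^ 2 * LO
  · nlinarith [mul_le_mul_of_nonneg_right hstar (le_of_lt (mul_pos hnj hno))]

open Fin.CommRing in
lemma exists_in_pair {n : ℕ} [NeZero n] (v : Fin n → Pt) (q : Pt) (a k₀ : Fin n)
    (ha : v a = q) (hk : v k₀ ≠ q) : ∃ j, v j ≠ q ∧ v (j + 1) = q := by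
  by_contra h
  push_neg at h
  have H : ∀ m : ℕ, v (k₀ + (m : Fin n)) ≠ q := by
    intro m
    induction m with
    | zero => simpa using hk
    | succ m ih =>
        have h2 := h _ ih
        have : (((m + 1 : ℕ) : Fin n)) = ((m : ℕ) : Fin n) + 1 := by push_cast; ring
        rw [this, ← add_assoc]
        exact h2
  have := H ((a - k₀ : Fin n) : ℕ)
  rw [Fin.cast_val_eq_self] at this
  rw [add_sub_cancel] at this
  exact this ha

open Fin.CommRing in
lemma exists_out_pair {n : ℕ} [NeZero n] (v : Fin n → Pt) (q : Pt) (a k₀ : Fin n)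
    (ha : v a = q) (hk : v k₀ ≠ q) : ∃ j, v j = q ∧ v (j + 1) ≠ q := by
  by_contra h
  push_neg at h
  have H : ∀ m : ℕ, v (a + (m : Fin n)) = q := by
    intro m
    induction m with
    | zero => simpa using ha
    | succ m ih =>
        have h2 := h _ ih
        have : (((m + 1 : ℕ) : Fin n)) = ((m : ℕ) : Fin n) + 1 := by push_cast; ring
        rw [this, ← add_assoc]
        exact h2
  have := H ((k₀ - a : Fin n) : ℕ)
  rw [Fin.cast_val_eq_self] at this
  rw [add_sub_cancel] at this
  exact hk this
lemma det2_sub_right (w x y : Pt) : det2 w (x - y) = det2 w x - det2 w y := by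
  simp only [det2, PiLp.sub_apply]; ring

lemma det2_smul_right (w : Pt) (r : ℝ) (x : Pt) : det2 w (r • x) = r * det2 w x := by
  simp only [det2, PiLp.smul_apply, smul_eq_mul]; ring

lemma det2_add_right (w x y : Pt) : det2 w (x + y) = det2 w x + det2 w y := by
  simp only [det2, PiLp.add_apply]; ring

lemma det2_zero_right (w : Pt) : det2 w (0 : Pt) = 0 := by
  simp [det2]

lemma binet (d w z : Pt) : ⟪w, z⟫ * ‖d‖ ^ 2 = ⟪d, w⟫ * ⟪d, z⟫ + det2 d w * det2 d z := by
  rw [inner2, inner2, inner2, normsq]; simp only [det2]; ring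

lemma tie_case_in {n : ℕ} [NeZero n] (v : Fin n → Pt)
    (hccw : ∀ i j : Fin n, 0 ≤ det2 (v (i + 1) - v i) (v j - v i))
    (hint : (interior (convexHull ℝ (Set.range v))).Nonempty)
    (p q : Pt) (hw : p - q ≠ 0)
    (hPle : ∀ k, ⟪p - q, v k - q⟫ ≤ 0)
    (k₀ : Fin n) (hk₀ : ⟪p - q, v k₀ - q⟫ < 0)
    (i : Fin n) (hiq : v i = q)
    (hDout : det2 (p - q) (v (i + 1) - q) < 0) :
    ∃ j : Fin n, v j ≠ q ∧ v (j + 1) = q ∧ det2 (p - q) (v j - q) < 0 ∧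
      ⟪p - q, v (i + 1) - q⟫ * ‖v j - q‖ < ⟪p - q, v j - q⟫ * ‖v (i + 1) - q‖ := by
  have hk₀q : v k₀ ≠ q := by
    intro h; rw [h, sub_self, inner_zero_right] at hk₀; exact lt_irrefl 0 hk₀
  obtain ⟨j, hj, hj1⟩ := exists_in_pair v q i k₀ hiq hk₀q
  have hW : (0:ℝ) < ‖p - q‖ ^ 2 := pow_pos (norm_pos_iff.mpr hw) 2
  have hzj : v j - q ≠ 0 := sub_ne_zero.mpr hj
  have hzo : v (i + 1) - q ≠ 0 := by
    intro h; rw [h, det2_zero_right] at hDout; exact lt_irrefl 0 hDout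
  have hnzj : (0:ℝ) < ‖v j - q‖ := norm_pos_iff.mpr hzj
  have hnzo : (0:ℝ) < ‖v (i + 1) - q‖ := norm_pos_iff.mpr hzo
  have hPj : ⟪p - q, v j - q⟫ ≤ 0 := hPle j
  have hPo : ⟪p - q, v (i + 1) - q⟫ ≤ 0 := hPle (i + 1)
  -- edge i convexity at any k: det2 (v(i+1) - q) (v k - q) ≥ 0
  have hedge_i : ∀ k, 0 ≤ det2 (v (i + 1) - q) (v k - q) := by
    intro k; have := hccw i k; rwa [hiq] at this
  -- edge j convexity at any k: det2 (v j - q) (v k - q) ≤ 0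
  have hedge_j : ∀ k, det2 (v j - q) (v k - q) ≤ 0 := by
    intro k
    have := hccw j k
    rw [hj1, det2_flip q (v j) (v k)] at this
    linarith
  have hdetid : ∀ x y : Pt, det2 x y * ‖p - q‖ ^ 2
      = det2 (p - q) y * ⟪p - q, x⟫ - det2 (p - q) x * ⟪p - q, y⟫ := fun x y => detid _ x y
  -- (∗): Dj * Po ≥ Do * Pj
  have hstar : det2 (p - q) (v (i+1) - q) * ⟪p - q, v j - q⟫
      ≤ det2 (p - q) (v j - q) * ⟪p - q, v (i+1) - q⟫ := by
    have h1 := mul_nonneg (hedge_i j) (le_of_lt hW)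
    have h2 := hdetid (v (i+1) - q) (v j - q)
    linarith
  have hDj : det2 (p - q) (v j - q) < 0 := by
    by_contra hc
    push_neg at hc
    have t1 : det2 (p - q) (v j - q) * ⟪p - q, v (i+1) - q⟫ ≤ 0 :=
      mul_nonpos_of_nonneg_of_nonpos hc hPo
    have t2 : 0 ≤ det2 (p - q) (v (i+1) - q) * ⟪p - q, v j - q⟫ := by
      nlinarith
    have e1 : det2 (p - q) (v (i+1) - q) * ⟪p - q, v j - q⟫ = 0 := le_antisymm (by linarith) t2
    have hPj0 : ⟪p - q, v j - q⟫ = 0 := by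
      rcases mul_eq_zero.mp e1 with h | h
      · exact absurd h (ne_of_lt hDout)
      · exact h
    have hDjne := PD_ne (p - q) (v j - q) hw hzj hPj0
    have hDjpos : 0 < det2 (p - q) (v j - q) := lt_of_le_of_ne hc (Ne.symm hDjne)
    have e2 : det2 (p - q) (v j - q) * ⟪p - q, v (i+1) - q⟫ = 0 := by
      rw [hPj0, mul_zero] at hstar
      have := mul_nonpos_of_nonneg_of_nonpos (le_of_lt hDjpos) hPo
      linarith
    have hPo0 : ⟪p - q, v (i+1) - q⟫ = 0 := by
      rcases mul_eq_zero.mp e2 with h | h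
      · exact absurd h (ne_of_gt hDjpos)
      · exact h
    -- k₀ contradiction
    have h1 := mul_nonneg (hedge_i k₀) (le_of_lt hW)
    have h2 := hdetid (v (i+1) - q) (v k₀ - q)
    rw [hPo0, mul_zero] at h2
    have h3 : 0 < det2 (p - q) (v (i+1) - q) * ⟪p - q, v k₀ - q⟫ :=
      mul_pos_of_neg_of_neg hDout hk₀
    linarith
  refine ⟨j, hj, hj1, hDj, ?_⟩
  by_contra hc
  push_neg at hc
  -- key_ineq
  obtain ⟨hXY, hAB⟩ := key_ineq (W := ‖p - q‖ ^ 2) hW hnzj hnzo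
    (lagrange (p - q) (v j - q)) (lagrange (p - q) (v (i+1) - q)) hPj hPo hDj hDout
    (by linarith [hstar]) hc
  -- parallel degenerate: all det2 (v(i+1) - q) (v k - q) = 0
  have hall : ∀ k, det2 (v (i + 1) - q) (v k - q) = 0 := by
    intro k
    have h2 := hdetid (v j - q) (v k - q)
    have h3 := hdetid (v (i+1) - q) (v k - q)
    have hJK := hedge_j k
    have hIK := hedge_i k
    -- det2 zj zk * ‖zo‖ = ‖zj‖ * det2 zo zk  (after dividing by W)
    have hprop : det2 (v j - q) (v k - q) * ‖v (i+1) - q‖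
        = ‖v j - q‖ * det2 (v (i+1) - q) (v k - q) := by
      have e : ‖p - q‖ ^ 2 * (det2 (v j - q) (v k - q) * ‖v (i+1) - q‖)
          = ‖p - q‖ ^ 2 * (‖v j - q‖ * det2 (v (i+1) - q) (v k - q)) := by
        have e2 : det2 (v j - q) (v k - q) * ‖p - q‖ ^ 2 * ‖v (i+1) - q‖
            = ‖v j - q‖ * (det2 (v (i+1) - q) (v k - q) * ‖p - q‖ ^ 2) := by
          rw [h2, h3]
          linear_combination (det2 (p - q) (v k - q)) * hXY
            - (inner ℝ (p - q) (v k - q) : ℝ) * hAB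
        linear_combination e2
      exact mul_left_cancel₀ (ne_of_gt hW) e
    have t1 : det2 (v j - q) (v k - q) * ‖v (i + 1) - q‖ ≤ 0 :=
      mul_nonpos_of_nonpos_of_nonneg hJK (le_of_lt hnzo)
    have t2 : 0 ≤ ‖v j - q‖ * det2 (v (i + 1) - q) (v k - q) :=
      mul_nonneg (le_of_lt hnzj) hIK
    have t3 : ‖v j - q‖ * det2 (v (i + 1) - q) (v k - q) = 0 := by linarith
    rcases mul_eq_zero.mp t3 with h | h
    · exact absurd h (ne_of_gt hnzj)
    · exact h
  have hdeg := hull_degenerate v (v (i+1) - q) q hzo hall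
  rw [hdeg] at hint
  exact Set.not_nonempty_empty hint
lemma tie_case_out {n : ℕ} [NeZero n] (v : Fin n → Pt)
    (hccw : ∀ i j : Fin n, 0 ≤ det2 (v (i + 1) - v i) (v j - v i))
    (hint : (interior (convexHull ℝ (Set.range v))).Nonempty)
    (p q : Pt) (hw : p - q ≠ 0)
    (hPle : ∀ k, ⟪p - q, v k - q⟫ ≤ 0)
    (k₀ : Fin n) (hk₀ : ⟪p - q, v k₀ - q⟫ < 0)
    (i : Fin n) (hiq : v (i + 1) = q)
    (hDin : 0 < det2 (p - q) (v i - q)) :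
    ∃ j : Fin n, v j = q ∧ v (j + 1) ≠ q ∧ 0 < det2 (p - q) (v (j + 1) - q) ∧
      ⟪p - q, v i - q⟫ * ‖v (j + 1) - q‖ < ⟪p - q, v (j + 1) - q⟫ * ‖v i - q‖ := by
  have hk₀q : v k₀ ≠ q := by
    intro h; rw [h, sub_self, inner_zero_right] at hk₀; exact lt_irrefl 0 hk₀
  obtain ⟨j, hjq, hj1⟩ := exists_out_pair v q (i + 1) k₀ hiq hk₀q
  have hW : (0:ℝ) < ‖p - q‖ ^ 2 := pow_pos (norm_pos_iff.mpr hw) 2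
  have hzin : v i - q ≠ 0 := by
    intro h; rw [h, det2_zero_right] at hDin; exact lt_irrefl 0 hDin
  have hze : v (j + 1) - q ≠ 0 := sub_ne_zero.mpr hj1
  have hnin : (0:ℝ) < ‖v i - q‖ := norm_pos_iff.mpr hzin
  have hne : (0:ℝ) < ‖v (j + 1) - q‖ := norm_pos_iff.mpr hze
  have hPin : ⟪p - q, v i - q⟫ ≤ 0 := hPle i
  have hPe : ⟪p - q, v (j + 1) - q⟫ ≤ 0 := hPle (j + 1)
  have hedge_i : ∀ k, det2 (v i - q) (v k - q) ≤ 0 := by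
    intro k
    have := hccw i k
    rw [hiq, det2_flip q (v i) (v k)] at this
    linarith
  have hedge_j : ∀ k, 0 ≤ det2 (v (j + 1) - q) (v k - q) := by
    intro k; have := hccw j k; rwa [hjq] at this
  have hdetid : ∀ x y : Pt, det2 x y * ‖p - q‖ ^ 2
      = det2 (p - q) y * ⟪p - q, x⟫ - det2 (p - q) x * ⟪p - q, y⟫ := fun x y => detid _ x y
  -- (∗∗): De * Pin ≤ Din * Pe
  have hstar : det2 (p - q) (v (j + 1) - q) * ⟪p - q, v i - q⟫
      ≤ det2 (p - q) (v i - q) * ⟪p - q, v (j + 1) - q⟫ := by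
    have h1 : det2 (v i - q) (v (j + 1) - q) * ‖p - q‖ ^ 2 ≤ 0 :=
      mul_nonpos_of_nonpos_of_nonneg (hedge_i (j + 1)) (le_of_lt hW)
    have h2 := hdetid (v i - q) (v (j + 1) - q)
    linarith
  have hDe : 0 < det2 (p - q) (v (j + 1) - q) := by
    by_contra hc
    push_neg at hc
    have t1 : 0 ≤ det2 (p - q) (v (j + 1) - q) * ⟪p - q, v i - q⟫ := by nlinarith
    have t2 : det2 (p - q) (v i - q) * ⟪p - q, v (j + 1) - q⟫ ≤ 0 :=
      mul_nonpos_of_nonneg_of_nonpos (le_of_lt hDin) hPe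
    have e2 : det2 (p - q) (v i - q) * ⟪p - q, v (j + 1) - q⟫ = 0 := le_antisymm t2 (by linarith)
    have hPe0 : ⟪p - q, v (j + 1) - q⟫ = 0 := by
      rcases mul_eq_zero.mp e2 with h | h
      · exact absurd h (ne_of_gt hDin)
      · exact h
    have hDene := PD_ne (p - q) (v (j + 1) - q) hw hze hPe0
    have hDeneg : det2 (p - q) (v (j + 1) - q) < 0 := lt_of_le_of_ne hc hDene
    have e1 : det2 (p - q) (v (j + 1) - q) * ⟪p - q, v i - q⟫ = 0 := by
      rw [hPe0, mul_zero] at hstar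
      have : 0 ≤ det2 (p - q) (v (j+1) - q) * ⟪p - q, v i - q⟫ := by nlinarith
      linarith
    have hPin0 : ⟪p - q, v i - q⟫ = 0 := by
      rcases mul_eq_zero.mp e1 with h | h
      · exact absurd h (ne_of_lt hDeneg)
      · exact h
    -- k₀ contradiction
    have h1 : det2 (v i - q) (v k₀ - q) * ‖p - q‖ ^ 2 ≤ 0 :=
      mul_nonpos_of_nonpos_of_nonneg (hedge_i k₀) (le_of_lt hW)
    have h2 := hdetid (v i - q) (v k₀ - q)
    rw [hPin0, mul_zero] at h2
    have h3 : det2 (p - q) (v i - q) * ⟪p - q, v k₀ - q⟫ < 0 :=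
      mul_neg_of_pos_of_neg hDin hk₀
    linarith
  refine ⟨j, hjq, hj1, hDe, ?_⟩
  by_contra hc
  push_neg at hc
  obtain ⟨hXY, hAB⟩ := key_ineq (W := ‖p - q‖ ^ 2)
    (nj := ‖v (j + 1) - q‖) (no := ‖v i - q‖)
    (Pj := ⟪p - q, v (j + 1) - q⟫) (Dj := - det2 (p - q) (v (j + 1) - q))
    (Po := ⟪p - q, v i - q⟫) (Do := - det2 (p - q) (v i - q))
    hW hne hnin
    (by linear_combination lagrange (p - q) (v (j + 1) - q))
    (by linear_combination lagrange (p - q) (v i - q))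
    hPe hPin (by linarith) (by linarith)
    (by linarith [hstar]) hc
  -- hXY : Pe * ‖zin‖ = Pin * ‖e‖ ; hAB : -De * ‖zin‖ = -Din * ‖e‖
  have hall : ∀ k, det2 (v i - q) (v k - q) = 0 := by
    intro k
    have h2 := hdetid (v (j + 1) - q) (v k - q)
    have h3 := hdetid (v i - q) (v k - q)
    have hJK := hedge_j k
    have hIK := hedge_i k
    have hprop : det2 (v (j + 1) - q) (v k - q) * ‖v i - q‖
        = ‖v (j + 1) - q‖ * det2 (v i - q) (v k - q) := by
      have e : ‖p - q‖ ^ 2 * (det2 (v (j + 1) - q) (v k - q) * ‖v i - q‖)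
          = ‖p - q‖ ^ 2 * (‖v (j + 1) - q‖ * det2 (v i - q) (v k - q)) := by
        have e2 : det2 (v (j + 1) - q) (v k - q) * ‖p - q‖ ^ 2 * ‖v i - q‖
            = ‖v (j + 1) - q‖ * (det2 (v i - q) (v k - q) * ‖p - q‖ ^ 2) := by
          rw [h2, h3]
          linear_combination (det2 (p - q) (v k - q)) * hXY
            + (inner ℝ (p - q) (v k - q) : ℝ) * hAB
        linear_combination e2
      exact mul_left_cancel₀ (ne_of_gt hW) e
    have t1 : 0 ≤ det2 (v (j + 1) - q) (v k - q) * ‖v i - q‖ :=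
      mul_nonneg hJK (le_of_lt hnin)
    have t2 : ‖v (j + 1) - q‖ * det2 (v i - q) (v k - q) ≤ 0 :=
      mul_nonpos_of_nonneg_of_nonpos (le_of_lt hne) hIK
    have t3 : ‖v (j + 1) - q‖ * det2 (v i - q) (v k - q) = 0 := by linarith
    rcases mul_eq_zero.mp t3 with h | h
    · exact absurd h (ne_of_gt hne)
    · exact h
  have hdeg := hull_degenerate v (v i - q) q hzin hall
  rw [hdeg] at hint
  exact Set.not_nonempty_empty hint

lemma vertexA {n : ℕ} [NeZero n] (v : Fin n → Pt)
    (hccw : ∀ i j : Fin n, 0 ≤ det2 (v (i + 1) - v i) (v j - v i))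
    (hint : (interior (convexHull ℝ (Set.range v))).Nonempty)
    (p q : Pt) (hw : p - q ≠ 0)
    (hPle : ∀ k, ⟪p - q, v k - q⟫ ≤ 0)
    (k₀ : Fin n) (hk₀ : ⟪p - q, v k₀ - q⟫ < 0)
    (a : Fin n) (ha : v a = q) :
    ∃ j : Fin n, q ∈ segment ℝ (v j) (v (j + 1)) ∧ det2 (v (j + 1) - v j) (p - v j) < 0 := by
  have hk₀q : v k₀ ≠ q := by
    intro h; rw [h, sub_self, inner_zero_right] at hk₀; exact lt_irrefl 0 hk₀
  obtain ⟨j, hj, hj1⟩ := exists_in_pair v q a k₀ ha hk₀q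
  obtain ⟨j', hjq', hj1'⟩ := exists_out_pair v q a k₀ ha hk₀q
  have hW : (0:ℝ) < ‖p - q‖ ^ 2 := pow_pos (norm_pos_iff.mpr hw) 2
  have hzj : v j - q ≠ 0 := sub_ne_zero.mpr hj
  have hze : v (j' + 1) - q ≠ 0 := sub_ne_zero.mpr hj1'
  have hPj : ⟪p - q, v j - q⟫ ≤ 0 := hPle j
  have hPe : ⟪p - q, v (j' + 1) - q⟫ ≤ 0 := hPle (j' + 1)
  have hedge_j : ∀ k, det2 (v j - q) (v k - q) ≤ 0 := by
    intro k
    have := hccw j k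
    rw [hj1, det2_flip q (v j) (v k)] at this
    linarith
  have hedge_j' : ∀ k, 0 ≤ det2 (v (j' + 1) - q) (v k - q) := by
    intro k; have := hccw j' k; rwa [hjq'] at this
  have hdetid : ∀ x y : Pt, det2 x y * ‖p - q‖ ^ 2
      = det2 (p - q) y * ⟪p - q, x⟫ - det2 (p - q) x * ⟪p - q, y⟫ := fun x y => detid _ x y
  have claim : det2 (p - q) (v j - q) < 0 ∨ 0 < det2 (p - q) (v (j' + 1) - q) := by
    by_contra hcl
    push_neg at hcl
    obtain ⟨hDj, hDe⟩ := hcl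
    -- hDj : 0 ≤ det2 (p-q) (v j - q), hDe : det2 (p-q) (v (j'+1) - q) ≤ 0
    have hstar : det2 (p - q) (v (j' + 1) - q) * ⟪p - q, v j - q⟫
        - det2 (p - q) (v j - q) * ⟪p - q, v (j' + 1) - q⟫ ≤ 0 := by
      have h1 : det2 (v j - q) (v (j' + 1) - q) * ‖p - q‖ ^ 2 ≤ 0 :=
        mul_nonpos_of_nonpos_of_nonneg (hedge_j (j' + 1)) (le_of_lt hW)
      have h2 := hdetid (v j - q) (v (j' + 1) - q)
      linarith
    have t1 : 0 ≤ det2 (p - q) (v (j' + 1) - q) * ⟪p - q, v j - q⟫ := by nlinarith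
    have t2 : det2 (p - q) (v j - q) * ⟪p - q, v (j' + 1) - q⟫ ≤ 0 :=
      mul_nonpos_of_nonneg_of_nonpos hDj hPe
    have e1 : det2 (p - q) (v (j' + 1) - q) * ⟪p - q, v j - q⟫ = 0 := by linarith
    have e2 : det2 (p - q) (v j - q) * ⟪p - q, v (j' + 1) - q⟫ = 0 := by linarith
    rcases eq_or_lt_of_le hPj with hPj0 | hPjneg
    · -- Pj = 0
      have hDjpos : 0 < det2 (p - q) (v j - q) :=
        lt_of_le_of_ne hDj (Ne.symm (PD_ne (p - q) (v j - q) hw hzj hPj0))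
      have hPe0 : ⟪p - q, v (j' + 1) - q⟫ = 0 := by
        rcases mul_eq_zero.mp e2 with h | h
        · exact absurd h (ne_of_gt hDjpos)
        · exact h
      have hDeneg : det2 (p - q) (v (j' + 1) - q) < 0 :=
        lt_of_le_of_ne hDe (PD_ne (p - q) (v (j' + 1) - q) hw hze hPe0)
      have h1 : 0 ≤ det2 (v (j' + 1) - q) (v k₀ - q) * ‖p - q‖ ^ 2 :=
        mul_nonneg (hedge_j' k₀) (le_of_lt hW)
      have h2 := hdetid (v (j' + 1) - q) (v k₀ - q)
      rw [hPe0] at h2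
      simp only [mul_zero, zero_sub] at h2
      have h3 : 0 < det2 (p - q) (v (j' + 1) - q) * ⟪p - q, v k₀ - q⟫ :=
        mul_pos_of_neg_of_neg hDeneg hk₀
      linarith
    · -- Pj < 0
      have hDe0 : det2 (p - q) (v (j' + 1) - q) = 0 := by
        rcases mul_eq_zero.mp e1 with h | h
        · exact h
        · exact absurd h (ne_of_lt hPjneg)
      have hPeneg : ⟪p - q, v (j' + 1) - q⟫ < 0 :=
        lt_of_le_of_ne hPe (by
          intro h
          exact PD_ne (p - q) (v (j' + 1) - q) hw hze h hDe0)
      have hDj0 : det2 (p - q) (v j - q) = 0 := by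
        rcases mul_eq_zero.mp e2 with h | h
        · exact h
        · exact absurd h (ne_of_lt hPeneg)
      have hall : ∀ k, det2 (p - q) (v k - q) = 0 := by
        intro k
        have i2 := hdetid (v (j' + 1) - q) (v k - q)
        rw [hDe0] at i2
        simp only [zero_mul, sub_zero] at i2
        have i3 := hdetid (v j - q) (v k - q)
        rw [hDj0] at i3
        simp only [zero_mul, sub_zero] at i3
        have hk1 : det2 (p - q) (v k - q) ≤ 0 := by
          nlinarith [mul_nonneg (hedge_j' k) (le_of_lt hW), i2]
        have hk2 : 0 ≤ det2 (p - q) (v k - q) := by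
          nlinarith [mul_nonpos_of_nonpos_of_nonneg (hedge_j k) (le_of_lt hW), i3]
        linarith
      have hdeg := hull_degenerate v (p - q) q hw hall
      rw [hdeg] at hint
      exact Set.not_nonempty_empty hint
  rcases claim with hcase | hcase
  · refine ⟨j, ?_, ?_⟩
    · rw [← hj1]; exact right_mem_segment ℝ _ _
    · rw [hj1, det2_flip q (v j) p]
      have heq : det2 (v j - q) (p - q) = - det2 (p - q) (v j - q) := det2_antisymm _ _
      rw [heq]
      linarith
  · refine ⟨j', ?_, ?_⟩
    · rw [← hjq']; exact left_mem_segment ℝ _ _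
    · rw [hjq']
      have : det2 (v (j' + 1) - q) (p - q) = - det2 (p - q) (v (j' + 1) - q) :=
        det2_antisymm _ _
      rw [this]
      linarith
lemma detid_pts (w A B C : Pt) :
    det2 (B - A) (C - A) * ‖w‖ ^ 2 =
      (det2 w C - det2 w A) * (⟪w, B⟫ - ⟪w, A⟫)
        - (det2 w B - det2 w A) * (⟪w, C⟫ - ⟪w, A⟫) := by
  rw [inner2, inner2, inner2, normsq]; simp only [det2, PiLp.sub_apply]; ring

def detL (w : Pt) : Pt →ₗ[ℝ] ℝ where
  toFun := det2 w
  map_add' x y := det2_add_right w x y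
  map_smul' r x := by simp only [det2_smul_right, smul_eq_mul, RingHom.id_apply]

lemma edge_through_q {n : ℕ} [NeZero n] (hn : 3 ≤ n) (v : Fin n → Pt)
    (hccw : ∀ i j : Fin n, 0 ≤ det2 (v (i + 1) - v i) (v j - v i))
    (p q : Pt) (hw : p - q ≠ 0)
    (hq : q ∈ convexHull ℝ (Set.range v))
    (hPle : ∀ k, ⟪p - q, v k - q⟫ ≤ 0)
    (k₀ : Fin n) (hk₀ : ⟪p - q, v k₀ - q⟫ < 0)
    (hnv : ∀ k, v k ≠ q) :
    ∃ j : Fin n, q ∈ segment ℝ (v j) (v (j + 1)) ∧ det2 (v (j + 1) - v j) (p - v j) < 0 := by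
  classical
  have hW : (0:ℝ) < ‖p - q‖ ^ 2 := pow_pos (norm_pos_iff.mpr hw) 2
  set w : Pt := p - q with hwdef
  have hSle : ∀ k, ⟪w, v k⟫ ≤ ⟪w, q⟫ := by
    intro k; have h := hPle k; rw [inner_sub_right] at h; linarith
  have hSk₀ : ⟪w, v k₀⟫ < ⟪w, q⟫ := by
    have h := hk₀; rw [inner_sub_right] at h; linarith
  -- convex combination
  rw [convexHull_eq] at hq
  obtain ⟨ι, t, f, g, hf0, hf1, hgs, hcm⟩ := hq
  have hqsum : ∑ i ∈ t, f i • g i = q := by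
    rw [← hcm]; exact (Finset.centerMass_eq_of_sum_1 t g hf1).symm
  have hPsum : ∑ i ∈ t, f i * ⟪w, g i⟫ = ⟪w, q⟫ := by
    rw [← hqsum, inner_sum]
    exact Finset.sum_congr rfl fun i _ => by rw [real_inner_smul_right]
  have hTsum : ∑ i ∈ t, f i * det2 w (g i) = det2 w q := by
    have h := map_sum (detL w) (fun i => f i • g i) t
    rw [hqsum] at h
    calc ∑ i ∈ t, f i * det2 w (g i) = ∑ i ∈ t, (detL w) (f i • g i) :=
          Finset.sum_congr rfl fun i _ => by simp [detL, det2_smul_right]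
      _ = (detL w) q := h.symm
      _ = det2 w q := rfl
  have hsupp : ∀ i ∈ t, f i ≠ 0 → ⟪w, g i⟫ = ⟪w, q⟫ := by
    have hzero : ∑ i ∈ t, (f i * ⟪w, q⟫ - f i * ⟪w, g i⟫) = 0 := by
      rw [Finset.sum_sub_distrib, ← Finset.sum_mul, hf1, hPsum]; ring
    have hnn : ∀ i ∈ t, 0 ≤ f i * ⟪w, q⟫ - f i * ⟪w, g i⟫ := by
      intro i hi
      obtain ⟨k, hk⟩ := hgs i hi
      have := hSle k
      rw [hk] at this
      have := mul_le_mul_of_nonneg_left this (hf0 i hi)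
      linarith
    intro i hi hfne
    have := (Finset.sum_eq_zero_iff_of_nonneg hnn).mp hzero i hi
    have hfpos : 0 < f i := lt_of_le_of_ne (hf0 i hi) (Ne.symm hfne)
    nlinarith
  have hposex : ∃ i₀ ∈ t, 0 < f i₀ := by
    by_contra hcon
    push_neg at hcon
    have : ∑ i ∈ t, f i = 0 :=
      Finset.sum_eq_zero fun i hi => le_antisymm (hcon i hi) (hf0 i hi)
    rw [hf1] at this
    norm_num at this
  have hup : ∃ b : Fin n, ⟪w, v b⟫ = ⟪w, q⟫ ∧ det2 w q ≤ det2 w (v b) := by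
    by_contra hcon
    push_neg at hcon
    obtain ⟨i₀, hi₀t, hi₀pos⟩ := hposex
    have hlt : ∑ i ∈ t, f i * det2 w (g i) < ∑ i ∈ t, f i * det2 w q := by
      apply Finset.sum_lt_sum
      · intro i hi
        rcases eq_or_lt_of_le (hf0 i hi) with h0 | hpos
        · rw [← h0]; simp
        · obtain ⟨k, hk⟩ := hgs i hi
          have hC := hsupp i hi (ne_of_gt hpos)
          have hlt2 : det2 w (g i) < det2 w q := by
            rw [← hk]; exact hcon k (by rw [hk]; exact hC)
          exact le_of_lt (mul_lt_mul_of_pos_left hlt2 hpos)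
      · refine ⟨i₀, hi₀t, ?_⟩
        obtain ⟨k, hk⟩ := hgs i₀ hi₀t
        have hC := hsupp i₀ hi₀t (ne_of_gt hi₀pos)
        have hlt2 : det2 w (g i₀) < det2 w q := by
          rw [← hk]; exact hcon k (by rw [hk]; exact hC)
        exact mul_lt_mul_of_pos_left hlt2 hi₀pos
    rw [hTsum, ← Finset.sum_mul, hf1, one_mul] at hlt
    exact lt_irrefl _ hlt
  have hdn : ∃ b : Fin n, ⟪w, v b⟫ = ⟪w, q⟫ ∧ det2 w (v b) ≤ det2 w q := by
    by_contra hcon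
    push_neg at hcon
    obtain ⟨i₀, hi₀t, hi₀pos⟩ := hposex
    have hlt : ∑ i ∈ t, f i * det2 w q < ∑ i ∈ t, f i * det2 w (g i) := by
      apply Finset.sum_lt_sum
      · intro i hi
        rcases eq_or_lt_of_le (hf0 i hi) with h0 | hpos
        · rw [← h0]; simp
        · obtain ⟨k, hk⟩ := hgs i hi
          have hC := hsupp i hi (ne_of_gt hpos)
          have hlt2 : det2 w q < det2 w (g i) := by
            rw [← hk]; exact hcon k (by rw [hk]; exact hC)
          exact le_of_lt (mul_lt_mul_of_pos_left hlt2 hpos)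
      · refine ⟨i₀, hi₀t, ?_⟩
        obtain ⟨k, hk⟩ := hgs i₀ hi₀t
        have hC := hsupp i₀ hi₀t (ne_of_gt hi₀pos)
        have hlt2 : det2 w q < det2 w (g i₀) := by
          rw [← hk]; exact hcon k (by rw [hk]; exact hC)
        exact mul_lt_mul_of_pos_left hlt2 hi₀pos
    rw [hTsum, ← Finset.sum_mul, hf1, one_mul] at hlt
    exact lt_irrefl _ hlt
  obtain ⟨bdn, hbdnC, hbdnT⟩ := hdn
  obtain ⟨bup, hbupC, hbupT⟩ := hup
  -- the finset P
  set P : Finset (Fin n) :=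
    Finset.univ.filter (fun k => ⟪w, v k⟫ = ⟪w, q⟫ ∧ det2 w (v k) ≤ det2 w q) with hP
  have hPne : P.Nonempty := ⟨bdn, Finset.mem_filter.mpr ⟨Finset.mem_univ _, hbdnC, hbdnT⟩⟩
  obtain ⟨a₁, ha₁P, ha₁max⟩ := P.exists_max_image (fun k => det2 w (v k)) hPne
  set P' : Finset (Fin n) := P.filter (fun k => det2 w (v k) = det2 w (v a₁)) with hP'
  obtain ⟨a, haP', hamax⟩ := P'.exists_max_image (fun k => ((k - k₀ : Fin n)).val)
    ⟨a₁, Finset.mem_filter.mpr ⟨ha₁P, rfl⟩⟩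
  have haP : a ∈ P := (Finset.mem_filter.mp haP').1
  have haT : det2 w (v a) = det2 w (v a₁) := (Finset.mem_filter.mp haP').2
  obtain ⟨-, haC, haτle⟩ :
      a ∈ Finset.univ ∧ ⟪w, v a⟫ = ⟪w, q⟫ ∧ det2 w (v a) ≤ det2 w q :=
    Finset.mem_filter.mp haP
  have hamax' : ∀ b ∈ P, det2 w (v b) ≤ det2 w (v a) := by
    intro b hb
    rw [haT]
    exact ha₁max b hb
  have hTlt : det2 w (v a) < det2 w q := by
    rcases lt_or_eq_of_le haτle with h | h
    · exact h
    · exact absurd (eq_of_PD hw haC h) (hnv a)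
  -- identity tool: for the edge (a, a+1)
  have hccwPD : ∀ (x : Fin n) (y : Fin n),
      0 ≤ (det2 w (v y) - det2 w (v x)) * (⟪w, v (x + 1)⟫ - ⟪w, v x⟫)
          - (det2 w (v (x + 1)) - det2 w (v x)) * (⟪w, v y⟫ - ⟪w, v x⟫) := by
    intro x y
    have h1 := mul_nonneg (hccw x y) (le_of_lt hW)
    have h2 := detid_pts w (v x) (v (x + 1)) (v y)
    linarith
  have hS1 : ⟪w, v (a + 1)⟫ = ⟪w, q⟫ := by
    rcases lt_or_eq_of_le (hSle (a + 1)) with hlt1 | h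
    · exfalso
      have hrun : ∀ b : Fin n, ⟪w, v b⟫ = ⟪w, q⟫ → det2 w (v b) ≤ det2 w (v a) := by
        intro b hb
        have := hccwPD a b
        rw [haC, hb] at this
        simp only [sub_self, mul_zero, sub_zero] at this
        nlinarith
      have h1 := hrun bup hbupC
      linarith
    · exact h
  have hfor : det2 w (v a) ≤ det2 w (v (a + 1)) := by
    have := hccwPD a k₀
    rw [haC, hS1] at this
    simp only [sub_self, mul_zero, zero_sub, zero_mul] at this
    nlinarith [hSk₀]
  have hqlt : det2 w q < det2 w (v (a + 1)) := by
    by_contra hle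
    push_neg at hle
    have ha1P : a + 1 ∈ P := Finset.mem_filter.mpr ⟨Finset.mem_univ _, hS1, hle⟩
    have ha1eq : det2 w (v (a + 1)) = det2 w (v a) := le_antisymm (hamax' _ ha1P) hfor
    have ha1P' : a + 1 ∈ P' := Finset.mem_filter.mpr ⟨ha1P, by rw [ha1eq, haT]⟩
    have hposle := hamax (a + 1) ha1P'
    have ha1ne : a + 1 - k₀ ≠ 0 := by
      intro h0
      have : a + 1 = k₀ := by
        have := sub_eq_zero.mp h0
        exact this
      rw [this] at hS1
      linarith [hSk₀]
    have hsub1 : a + 1 - k₀ = (a - k₀) + 1 := by abel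
    have hvone : ((1 : Fin n) : ℕ) = 1 := by
      rw [Fin.val_one']
      exact Nat.mod_eq_of_lt (by omega)
    have hvadd : ((a - k₀ + 1 : Fin n) : ℕ) = (((a - k₀ : Fin n) : ℕ) + 1) % n := by
      rw [Fin.val_add, hvone]
    have hvlt : ((a - k₀ : Fin n) : ℕ) < n := (a - k₀).isLt
    rcases Nat.lt_or_ge (((a - k₀ : Fin n) : ℕ) + 1) n with hlt | hge
    · have : ((a + 1 - k₀ : Fin n) : ℕ) = ((a - k₀ : Fin n) : ℕ) + 1 := by
        rw [hsub1, hvadd]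
        exact Nat.mod_eq_of_lt hlt
      omega
    · have hEq : ((a - k₀ : Fin n) : ℕ) + 1 = n := by omega
      have : ((a + 1 - k₀ : Fin n) : ℕ) = 0 := by
        rw [hsub1, hvadd, hEq, Nat.mod_self]
      exact ha1ne (Fin.ext (by simpa using this))
  -- now q strictly between on the segment
  have hden : (0:ℝ) < det2 w (v (a + 1)) - det2 w (v a) := by linarith
  set r : ℝ := (det2 w q - det2 w (v a)) / (det2 w (v (a + 1)) - det2 w (v a)) with hr
  have hr0 : 0 < r := div_pos (by linarith) hden
  have hr1 : r < 1 := (div_lt_one hden).mpr (by linarith)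
  have hrmul : r * (det2 w (v (a + 1)) - det2 w (v a)) = det2 w q - det2 w (v a) :=
    div_mul_cancel₀ _ (ne_of_gt hden)
  have hqeq : v a + r • (v (a + 1) - v a) = q := by
    apply eq_of_PD hw
    · rw [inner_add_right, real_inner_smul_right, inner_sub_right, haC, hS1]
      ring
    · rw [det2_add_right, det2_smul_right, det2_sub_right]
      linarith [hrmul]
  have hseg : q ∈ segment ℝ (v a) (v (a + 1)) := by
    rw [segment_eq_image']
    exact ⟨r, ⟨le_of_lt hr0, le_of_lt hr1⟩, hqeq⟩
  have hPpa : ⟪w, p - v a⟫ = ‖w‖ ^ 2 := by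
    have h1 : ⟪w, p - q⟫ = ‖w‖ ^ 2 := by
      rw [← hwdef]
      exact real_inner_self_eq_norm_sq w
    rw [inner_sub_right] at h1 ⊢
    linarith [haC]
  have hright : det2 (v (a + 1) - v a) (p - v a) < 0 := by
    have h2 := detid_pts w (v a) (v (a + 1)) p
    have h3 : ⟪w, v (a + 1)⟫ - ⟪w, v a⟫ = 0 := by rw [haC, hS1]; ring
    have h6 : ⟪w, p⟫ - ⟪w, v a⟫ = ‖w‖ ^ 2 := by
      rw [inner_sub_right] at hPpa
      linarith
    have h4 : det2 (v (a + 1) - v a) (p - v a) * ‖w‖ ^ 2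
        = - (det2 w (v (a + 1)) - det2 w (v a)) * ‖w‖ ^ 2 := by
      rw [h2, h3, h6]
      ring
    have h5 := mul_right_cancel₀ (ne_of_gt hW) h4
    nlinarith
  exact ⟨a, hseg, hright⟩

lemma closestPt_spec (a b p : Pt) : closestPt a b p ∈ segment ℝ a b ∧
    infDist p (segment ℝ a b) = dist p (closestPt a b p) :=
  Classical.choose_spec ((isCompact_seg a b).exists_infDist_eq_dist
    ⟨a, left_mem_segment ℝ a b⟩ p)

lemma det2_self (x : Pt) : det2 x x = 0 := by simp [det2]; ring

end

/-- Key progress lemma for the abstract celestial walk: if `p` is strictly to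
the left of edge `e` (edge `i`) of a convex polygon `F` but `p ∉ F`, then some
edge `e'` of `F` has `p` strictly to its right and strictly smaller celestial
distance to `p` than `e`. -/
theorem celestial_progress
    (n : ℕ) [NeZero n] (hn : 3 ≤ n) (v : Fin n → Pt)
    (hccw : ∀ i j : Fin n, 0 ≤ det2 (v (i + 1) - v i) (v j - v i))
    (hint : (interior (convexHull ℝ (Set.range v))).Nonempty)
    (i : Fin n) (p : Pt)
    (hleft : 0 < det2 (v (i + 1) - v i) (p - v i))
    (hp : p ∉ convexHull ℝ (Set.range v)) :
    ∃ j : Fin n, det2 (v (j + 1) - v j) (p - v j) < 0 ∧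
      cLt (celestialDist (v j) (v (j + 1)) p) (celestialDist (v i) (v (i + 1)) p) := by
  classical
  set F := convexHull ℝ (Set.range v) with hF
  have hFcv : Convex ℝ F := convex_convexHull ℝ _
  have hFcp : IsCompact F := (Set.finite_range v).isCompact_convexHull ℝ
  have hFcl : IsClosed F := hFcp.isClosed
  have hFne : F.Nonempty := ⟨v i, subset_convexHull ℝ _ (Set.mem_range_self i)⟩
  obtain ⟨q, hqF, hdq⟩ := hFcp.exists_infDist_eq_dist hFne p
  have hw : p - q ≠ 0 := sub_ne_zero.mpr (fun h => hp (h ▸ hqF))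
  have hW : (0:ℝ) < ‖p - q‖ ^ 2 := pow_pos (norm_pos_iff.mpr hw) 2
  have hvar : ∀ x ∈ F, ⟪p - q, x - q⟫ ≤ 0 := by
    apply (norm_eq_iInf_iff_real_inner_le_zero hFcv hqF).mp
    rw [← dist_eq_norm, hdq.symm, infDist_eq_iInf]
    simp only [dist_eq_norm]
  have hPle : ∀ k, ⟪p - q, v k - q⟫ ≤ 0 := fun k =>
    hvar _ (subset_convexHull ℝ _ (Set.mem_range_self k))
  have hdpos : 0 < infDist p F := by
    rcases lt_or_eq_of_le (infDist_nonneg (s := F) (x := p)) with h | h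
    · exact h
    · exact absurd ((hFcl.mem_iff_infDist_zero hFne).mpr h.symm) hp
  have hsegsub : ∀ j : Fin n, segment ℝ (v j) (v (j + 1)) ⊆ F := fun j =>
    hFcv.segment_subset (subset_convexHull ℝ _ (Set.mem_range_self j))
      (subset_convexHull ℝ _ (Set.mem_range_self (j + 1)))
  have hdle : ∀ j : Fin n, infDist p F ≤ infDist p (segment ℝ (v j) (v (j + 1))) := fun j =>
    infDist_le_infDist_of_subset (hsegsub j) ⟨v j, left_mem_segment ℝ _ _⟩
  obtain ⟨k₀, hk₀⟩ : ∃ k, ⟪p - q, v k - q⟫ < 0 := by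
    by_contra hcon
    push_neg at hcon
    have hall0 : ∀ k, ⟪p - q, v k - q⟫ = 0 := fun k => le_antisymm (hPle k) (hcon k)
    set u : Pt := EuclideanSpace.single 1 ((p - q) 0) - EuclideanSpace.single 0 ((p - q) 1)
      with hu
    have hu0 : u 0 = - (p - q) 1 := by
      simp [hu, PiLp.sub_apply, EuclideanSpace.single_apply]
    have hu1 : u 1 = (p - q) 0 := by
      simp [hu, PiLp.sub_apply, EuclideanSpace.single_apply]
    have hune : u ≠ 0 := by
      intro h
      apply hw
      have h0 : u 0 = 0 := by rw [h]; rfl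
      have h1 : u 1 = 0 := by rw [h]; rfl
      rw [hu0] at h0
      rw [hu1] at h1
      ext m
      fin_cases m
      · simpa using h1
      · simpa using (neg_eq_zero.mp h0)
    have halld : ∀ k, det2 u (v k - q) = 0 := by
      intro k
      have := hall0 k
      rw [inner2] at this
      simp only [det2, hu0, hu1]
      nlinarith [this]
    have hdeg := hull_degenerate v u q hune halld
    rw [← hF] at hdeg
    rw [hdeg] at hint
    exact Set.not_nonempty_empty hint
  by_cases htie : infDist p (segment ℝ (v i) (v (i + 1))) = infDist p F
  · -- tie case
    obtain ⟨hcmem, hcdist⟩ := closestPt_spec (v i) (v (i + 1)) p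
    have hclq : closestPt (v i) (v (i + 1)) p = q :=
      proj_unique hFcv (hsegsub i hcmem) hqF (by rw [← hcdist, htie]) hdq.symm
    have hqseg : q ∈ segment ℝ (v i) (v (i + 1)) := hclq ▸ hcmem
    rw [segment_eq_image'] at hqseg
    obtain ⟨r, hr, hrq⟩ := hqseg
    have hrq' : v i + r • (v (i + 1) - v i) = q := hrq
    have hnotmid : ¬ (0 < r ∧ r < 1) := by
      rintro ⟨hr0, hr1⟩
      have hqvi : q - v i = r • (v (i + 1) - v i) := by
        rw [← hrq']; exact add_sub_cancel_left _ _
      have hvi : v i - q = -(r • (v (i + 1) - v i)) := by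
        rw [← hrq']; exact sub_add_cancel_left _ _
      have hvi1 : v (i + 1) - q = (1 - r) • (v (i + 1) - v i) := by
        rw [← hrq', sub_add_eq_sub_sub, sub_smul, one_smul]
      have hPi := hPle i
      rw [hvi, inner_neg_right, real_inner_smul_right] at hPi
      have hPi1 := hPle (i + 1)
      rw [hvi1, real_inner_smul_right] at hPi1
      have hPd : ⟪p - q, v (i + 1) - v i⟫ = 0 := by
        have h1 : 0 ≤ ⟪p - q, v (i + 1) - v i⟫ := by nlinarith
        have h2 : ⟪p - q, v (i + 1) - v i⟫ ≤ 0 := by nlinarith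
        linarith
      have hDdw : 0 < det2 (v (i + 1) - v i) (p - q) := by
        have h1 : p - v i = (p - q) + r • (v (i + 1) - v i) := by
          rw [← hqvi]; abel
        have h2 := hleft
        rw [h1, det2_add_right, det2_smul_right, det2_self, mul_zero, add_zero] at h2
        exact h2
      have hd0 : v (i + 1) - v i ≠ 0 := by
        intro h
        rw [h] at hDdw
        simp [det2] at hDdw
      have hall : ∀ k, det2 (v (i + 1) - v i) (v k - q) = 0 := by
        intro k
        have hb := binet (v (i + 1) - v i) (p - q) (v k - q)
        have hPd' : ⟪v (i + 1) - v i, p - q⟫ = (0:ℝ) := by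
          rw [real_inner_comm]; exact hPd
        rw [hPd', zero_mul, zero_add] at hb
        have hle2 : det2 (v (i + 1) - v i) (v k - q) ≤ 0 := by
          nlinarith [mul_nonpos_of_nonpos_of_nonneg (hPle k) (sq_nonneg ‖v (i + 1) - v i‖), hb]
        have hge : 0 ≤ det2 (v (i + 1) - v i) (v k - q) := by
          have h1 := hccw i k
          have h2 : det2 (v (i + 1) - v i) (v k - q)
              = det2 (v (i + 1) - v i) (v k - v i) - det2 (v (i + 1) - v i) (q - v i) := by
            rw [det2_sub_right, det2_sub_right, det2_sub_right]
            ring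
          rw [hqvi, det2_smul_right, det2_self, mul_zero, sub_zero] at h2
          rw [h2]
          exact h1
        linarith
      have hdeg := hull_degenerate v (v (i + 1) - v i) q hd0 hall
      rw [← hF] at hdeg
      rw [hdeg] at hint
      exact Set.not_nonempty_empty hint
    have hcases : v i = q ∨ v (i + 1) = q := by
      rcases eq_or_lt_of_le hr.1 with h0 | h0
      · left; rw [← hrq', ← h0, zero_smul, add_zero]
      · rcases eq_or_lt_of_le hr.2 with h1 | h1
        · right; rw [← hrq', h1, one_smul]; abel
        · exact absurd ⟨h0, h1⟩ hnotmid
    have hinfseg : ∀ jj : Fin n, q ∈ segment ℝ (v jj) (v (jj + 1)) →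
        infDist p (segment ℝ (v jj) (v (jj + 1))) = infDist p F := by
      intro jj hq
      refine le_antisymm ?_ (hdle jj)
      calc infDist p (segment ℝ (v jj) (v (jj + 1))) ≤ dist p q := infDist_le_dist_of_mem hq
        _ = infDist p F := hdq.symm
    rcases hcases with hviq | hviq
    · -- q = v i : incoming edge
      have hDout : det2 (p - q) (v (i + 1) - q) < 0 := by
        have h := hleft
        rw [hviq] at h
        have heq : det2 (v (i + 1) - q) (p - q) = - det2 (p - q) (v (i + 1) - q) :=
          det2_antisymm _ _
        rw [heq] at h
        linarith
      obtain ⟨j, hj, hj1, hDj, hkey⟩ := tie_case_in v hccw hint p q hw hPle k₀ hk₀ i hviq hDout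
      have hqsegj : q ∈ segment ℝ (v j) (v (j + 1)) := by
        rw [← hj1]; exact right_mem_segment ℝ _ _
      have hinfj := hinfseg j hqsegj
      refine ⟨j, ?_, ?_⟩
      · rw [hj1, det2_flip q (v j) p]
        have heq : det2 (v j - q) (p - q) = - det2 (p - q) (v j - q) := det2_antisymm _ _
        rw [heq]
        linarith
      · refine Or.inr ⟨?_, ?_⟩
        · show infDist p (segment ℝ (v j) (v (j + 1)))
              = infDist p (segment ℝ (v i) (v (i + 1)))
          rw [hinfj, htie]
        · show wideAngle (v j) (v (j + 1)) p < wideAngle (v i) (v (i + 1)) p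
          obtain ⟨hcmemj, hcdistj⟩ := closestPt_spec (v j) (v (j + 1)) p
          have hclqj : closestPt (v j) (v (j + 1)) p = q :=
            proj_unique hFcv (hsegsub j hcmemj) hqF (by rw [← hcdistj, hinfj]) hdq.symm
          have h0j : ¬ infDist p (segment ℝ (v j) (v (j + 1))) = 0 := by
            rw [hinfj]; exact ne_of_gt hdpos
          have h0i : ¬ infDist p (segment ℝ (v i) (v (i + 1))) = 0 := by
            rw [htie]; exact ne_of_gt hdpos
          rw [wideAngle, wideAngle, if_neg h0j, if_neg h0i, hclq, hclqj]
          have e1 : v (j + 1) - q = 0 := by rw [hj1, sub_self]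
          have e2 : v i - q = 0 := by rw [hviq, sub_self]
          rw [e1, e2, InnerProductGeometry.angle_zero_right]
          have hzj : v j - q ≠ 0 := sub_ne_zero.mpr hj
          have hzo : v (i + 1) - q ≠ 0 := by
            intro h; rw [h, det2_zero_right] at hDout; exact lt_irrefl 0 hDout
          rw [max_eq_left (pi_div_two_le_angle _ _ (hPle j)),
            max_eq_right (pi_div_two_le_angle _ _ (hPle (i + 1)))]
          exact angle_lt_angle (p - q) (v j - q) (v (i + 1) - q) hw hzj hzo hkey
    · -- q = v (i+1) : outgoing edge
      have hDin : 0 < det2 (p - q) (v i - q) := by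
        have h := hleft
        rw [hviq, det2_flip q (v i) p] at h
        have heq : det2 (v i - q) (p - q) = - det2 (p - q) (v i - q) := det2_antisymm _ _
        rw [heq] at h
        linarith
      obtain ⟨j, hjq, hj1, hDe, hkey⟩ := tie_case_out v hccw hint p q hw hPle k₀ hk₀ i hviq hDin
      have hqsegj : q ∈ segment ℝ (v j) (v (j + 1)) := by
        rw [← hjq]; exact left_mem_segment ℝ _ _
      have hinfj := hinfseg j hqsegj
      refine ⟨j, ?_, ?_⟩
      · rw [hjq]
        have heq : det2 (v (j + 1) - q) (p - q) = - det2 (p - q) (v (j + 1) - q) :=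
          det2_antisymm _ _
        rw [heq]
        linarith
      · refine Or.inr ⟨?_, ?_⟩
        · show infDist p (segment ℝ (v j) (v (j + 1)))
              = infDist p (segment ℝ (v i) (v (i + 1)))
          rw [hinfj, htie]
        · show wideAngle (v j) (v (j + 1)) p < wideAngle (v i) (v (i + 1)) p
          obtain ⟨hcmemj, hcdistj⟩ := closestPt_spec (v j) (v (j + 1)) p
          have hclqj : closestPt (v j) (v (j + 1)) p = q :=
            proj_unique hFcv (hsegsub j hcmemj) hqF (by rw [← hcdistj, hinfj]) hdq.symm
          have h0j : ¬ infDist p (segment ℝ (v j) (v (j + 1))) = 0 := by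
            rw [hinfj]; exact ne_of_gt hdpos
          have h0i : ¬ infDist p (segment ℝ (v i) (v (i + 1))) = 0 := by
            rw [htie]; exact ne_of_gt hdpos
          rw [wideAngle, wideAngle, if_neg h0j, if_neg h0i, hclq, hclqj]
          have e1 : v j - q = 0 := by rw [hjq, sub_self]
          have e2 : v (i + 1) - q = 0 := by rw [hviq, sub_self]
          rw [e1, e2, InnerProductGeometry.angle_zero_right]
          have hze : v (j + 1) - q ≠ 0 := sub_ne_zero.mpr hj1
          have hzin : v i - q ≠ 0 := by
            intro h; rw [h, det2_zero_right] at hDin; exact lt_irrefl 0 hDin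
          rw [max_eq_right (pi_div_two_le_angle _ _ (hPle (j + 1))),
            max_eq_left (pi_div_two_le_angle _ _ (hPle i))]
          exact angle_lt_angle (p - q) (v (j + 1) - q) (v i - q) hw hze hzin hkey
  · have hdlt : infDist p F < infDist p (segment ℝ (v i) (v (i + 1))) :=
      lt_of_le_of_ne (hdle i) (fun h => htie h.symm)
    have hmain : ∃ j : Fin n, q ∈ segment ℝ (v j) (v (j + 1)) ∧
        det2 (v (j + 1) - v j) (p - v j) < 0 := by
      by_cases hvq : ∃ a, v a = q
      · obtain ⟨a, ha⟩ := hvq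
        exact vertexA v hccw hint p q hw hPle k₀ hk₀ a ha
      · push_neg at hvq
        exact edge_through_q hn v hccw p q hw hqF hPle k₀ hk₀ hvq
    obtain ⟨j, hjseg, hjright⟩ := hmain
    refine ⟨j, hjright, Or.inl ?_⟩
    show infDist p (segment ℝ (v j) (v (j + 1))) < infDist p (segment ℝ (v i) (v (i + 1)))
    calc infDist p (segment ℝ (v j) (v (j + 1))) ≤ dist p q := infDist_le_dist_of_mem hjseg
      _ = infDist p F := hdq.symm
      _ < _ := hdlt
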